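/- Theorem 3 (the gradient directions of SAF-F and of Spike Representation with a feedback connection are similar): the Frobenius inner product of the two gradient matrices is strictly positive, i.e., Σ_{a,j} G̃_{aj} G_{aj} > 0, where G̃ := â ⊗ g̃ and G := â ⊗ g with g := g̃ (I − M)⁻¹ (i.e., g_j = Σ_i g̃_i ((I − M)⁻¹)_{ij}). -/

import Mathlib

open Matrix

/-- Theorem 3, the gradient directions of SAF-F and of Spike Representation
with a feedback connection are similar: if `‖M x‖ ≤ c ‖x‖` (Euclidean norm) for a
constant `c < 1`, `â ≠ 0`, `g̃ ≠ 0`, and `g = g̃ (I − M)⁻¹`, then the Frobenius inner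
product of the outer-product gradient matrices `G̃ = â ⊗ g̃` and `G = â ⊗ g` is strictly
positive. -/
theorem safF_spike_representation_feedback_inner_product_pos
    (n k : ℕ) (M : Matrix (Fin n) (Fin n) ℝ) (c : ℝ) (hc : c < 1)
    (hM : ∀ x : Fin n → ℝ,
      Real.sqrt (∑ i, (M.mulVec x i) ^ 2) ≤ c * Real.sqrt (∑ i, (x i) ^ 2))
    (ahat : Fin k → ℝ) (ha : ahat ≠ 0)
    (gtilde : Fin n → ℝ) (hgt : gtilde ≠ 0)
    (g : Fin n → ℝ) (hg : g = Matrix.vecMul gtilde (1 - M)⁻¹) :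
    0 < ∑ a, ∑ j,
      Matrix.vecMulVec ahat gtilde a j * Matrix.vecMulVec ahat g a j := by
  have sumpos : ∀ {m : ℕ} (v : Fin m → ℝ), v ≠ 0 → 0 < ∑ i, (v i) ^ 2 := by
    intro m v hv
    rcases Function.ne_iff.mp hv with ⟨i, hi⟩
    simp only [Pi.zero_apply] at hi
    have h1 : (0:ℝ) < v i ^ 2 := by positivity
    exact lt_of_lt_of_le h1 (Finset.single_le_sum (fun j _ => sq_nonneg (v j))
      (Finset.mem_univ i))
  -- Step 1: 1 - M is invertible
  have hunit : IsUnit (1 - M) := by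
    have hinj : Function.Injective ((1 - M).mulVecLin) := by
      rw [← LinearMap.ker_eq_bot, LinearMap.ker_eq_bot']
      intro x hx
      have hx0 : (1 - M).mulVec x = 0 := hx
      have hx' : x = M.mulVec x :=
        sub_eq_zero.mp (by simpa [Matrix.sub_mulVec] using hx0)
      by_contra hx1
      have hpos : 0 < Real.sqrt (∑ i, (x i) ^ 2) := Real.sqrt_pos.mpr (sumpos x hx1)
      have h1 := hM x
      rw [← hx'] at h1
      nlinarith
    rw [← Matrix.mulVec_injective_iff_isUnit]
    simpa only [Matrix.coe_mulVecLin] using hinj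
  -- Step 2: gtilde = g ᵥ* (1 - M)
  have hginv : Matrix.vecMul g (1 - M) = gtilde := by
    rw [hg, Matrix.vecMul_vecMul,
      Matrix.nonsing_inv_mul _ ((Matrix.isUnit_iff_isUnit_det _).mp hunit), Matrix.vecMul_one]
  -- Step 3: g ≠ 0
  have hg0 : g ≠ 0 := by
    intro h
    apply hgt
    rw [← hginv, h]
    simp [Matrix.vecMul]
  have hG : 0 < ∑ i, (g i) ^ 2 := sumpos g hg0
  -- Step 4: ∑ gtilde j * g j > 0
  have key : 0 < ∑ j, gtilde j * g j := by
    have hexp : ∑ j, gtilde j * g j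
        = (∑ j, (g j)^2) - ∑ i, g i * M.mulVec g i := by
      have hdp : gtilde ⬝ᵥ g = g ⬝ᵥ ((1 - M) *ᵥ g) := by
        rw [← hginv, ← Matrix.dotProduct_mulVec]
      simpa [dotProduct, Matrix.sub_mulVec, Matrix.one_mulVec, mul_sub,
        Finset.sum_sub_distrib, sq] using hdp
    -- Cauchy-Schwarz bound
    have hcs : ∑ i, g i * M.mulVec g i
        ≤ Real.sqrt (∑ i, (g i)^2) * Real.sqrt (∑ i, (M.mulVec g i)^2) := by
      have h1 := Finset.sum_mul_sq_le_sq_mul_sq Finset.univ g (M.mulVec g)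
      calc ∑ i, g i * M.mulVec g i
          ≤ Real.sqrt ((∑ i, g i * M.mulVec g i)^2) := by
            rw [Real.sqrt_sq_eq_abs]; exact le_abs_self _
        _ ≤ Real.sqrt ((∑ i, (g i)^2) * ∑ i, (M.mulVec g i)^2) := Real.sqrt_le_sqrt h1
        _ = _ := Real.sqrt_mul (Finset.sum_nonneg fun i _ => sq_nonneg _) _
    have hMg := hM g
    have hsq : Real.sqrt (∑ i, (g i)^2) ^ 2 = ∑ i, (g i)^2 :=
      Real.sq_sqrt (Finset.sum_nonneg fun i _ => sq_nonneg _)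
    have hsqpos : 0 < Real.sqrt (∑ i, (g i)^2) := Real.sqrt_pos.mpr hG
    have hbound : ∑ i, g i * M.mulVec g i
        ≤ Real.sqrt (∑ i, (g i)^2) * (c * Real.sqrt (∑ i, (g i)^2)) :=
      hcs.trans (mul_le_mul_of_nonneg_left hMg (le_of_lt hsqpos))
    rw [hexp]
    nlinarith [hbound, hsq, hG, sq_nonneg (Real.sqrt (∑ i, (g i)^2))]
  have hA : 0 < ∑ a, (ahat a) ^ 2 := sumpos ahat ha
  -- Final: factor the double sum
  have hfact : ∑ a, ∑ j, Matrix.vecMulVec ahat gtilde a j * Matrix.vecMulVec ahat g a j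
      = (∑ a, (ahat a)^2) * ∑ j, gtilde j * g j := by
    simp only [Matrix.vecMulVec_apply]
    rw [Finset.sum_mul]
    congr 1; ext a
    rw [Finset.mul_sum]
    congr 1; ext j
    ring
  rw [hfact]
  exact mul_pos hA key
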